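/- Suppose $X$ is a nonnegative random variable with a finite moment generating function, and $\lambda$ and $a$ are positive constants such that for any $\theta \ge 0$, $\mathbb{E}(X e^{\theta X}) \le \lambda e^{\theta a}\, \mathbb{E}(e^{\theta X})$. Then for every $\theta \ge 0$, the moment generating function satisfies $\mathbb{E}(e^{\theta X}) \le \exp\big(\frac{\lambda(e^{\theta a} - 1)}{a}\big)$. -/

import Mathlib

open MeasureTheory ProbabilityTheory Real

/-- **Intermediate step in Lemma 3.2**: a bound on the moment generating function from a
self-bounding condition. -/
theorem mgf_bound_of_self_bound {Ω : Type*} [MeasurableSpace Ω] (μ : Measure Ω)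
    [IsProbabilityMeasure μ] (X : Ω → ℝ) (hXnn : ∀ ω, 0 ≤ X ω)
    (hmgf : ∀ θ : ℝ, 0 ≤ θ → Integrable (fun ω => Real.exp (θ * X ω)) μ)
    (lam a : ℝ) (hlam : 0 < lam) (ha : 0 < a)
    (hyp : ∀ θ : ℝ, 0 ≤ θ →
      ∫ ω, X ω * Real.exp (θ * X ω) ∂μ ≤
        lam * Real.exp (θ * a) * ∫ ω, Real.exp (θ * X ω) ∂μ) :
    ∀ θ : ℝ, 0 ≤ θ →
      ∫ ω, Real.exp (θ * X ω) ∂μ ≤ Real.exp (lam * (Real.exp (θ * a) - 1) / a) := by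
  -- X is a.e. measurable
  have hXm : AEMeasurable X μ := by
    have h1 : Integrable (fun ω => Real.exp (1 * X ω)) μ := hmgf 1 zero_le_one
    have : AEMeasurable (fun ω => Real.exp (1 * X ω)) μ :=
      h1.aestronglyMeasurable.aemeasurable
    have : AEMeasurable (fun ω => Real.log (Real.exp (1 * X ω))) μ :=
      Real.measurable_log.comp_aemeasurable this
    simpa [Real.log_exp] using this
  -- integrability of exp(θ X) for all θ
  have I1 : ∀ θ : ℝ, Integrable (fun ω => Real.exp (θ * X ω)) μ := by
    intro θ
    rcases le_or_gt 0 θ with h | h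
    · exact hmgf θ h
    · refine Integrable.mono' (integrable_const 1)
        (Real.measurable_exp.comp_aemeasurable (hXm.const_mul θ)).aestronglyMeasurable ?_
      filter_upwards with ω
      rw [Real.norm_eq_abs, abs_of_pos (Real.exp_pos _)]
      have : θ * X ω ≤ 0 := mul_nonpos_of_nonpos_of_nonneg h.le (hXnn ω)
      simpa using Real.exp_le_exp.2 this
  -- integrability of X exp(θ X)
  have I2 : ∀ θ : ℝ, Integrable (fun ω => X ω * Real.exp (θ * X ω)) μ := by
    intro θ
    refine Integrable.mono' (I1 (1 + θ))
      (hXm.mul (Real.measurable_exp.comp_aemeasurable (hXm.const_mul θ))).aestronglyMeasurable ?_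
    filter_upwards with ω
    rw [Real.norm_eq_abs, abs_of_nonneg (mul_nonneg (hXnn ω) (Real.exp_pos _).le)]
    calc X ω * Real.exp (θ * X ω) ≤ Real.exp (X ω) * Real.exp (θ * X ω) := by
          exact mul_le_mul_of_nonneg_right
            ((Real.add_one_le_exp (X ω)).trans' (by linarith)) (Real.exp_pos _).le
      _ = Real.exp ((1 + θ) * X ω) := by rw [← Real.exp_add]; ring_nf
  set g : ℝ → ℝ := fun θ => ∫ ω, Real.exp (θ * X ω) ∂μ with hg
  have hgpos : ∀ θ, 0 < g θ := fun θ =>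
    integral_exp_pos (by simpa using I1 θ)
  -- derivative of g
  have hgderiv : ∀ θ : ℝ, HasDerivAt g (∫ ω, X ω * Real.exp (θ * X ω) ∂μ) θ := by
    intro θ₀
    have key := hasDerivAt_integral_of_dominated_loc_of_deriv_le (μ := μ)
      (F := fun θ ω => Real.exp (θ * X ω))
      (F' := fun θ ω => X ω * Real.exp (θ * X ω))
      (x₀ := θ₀) (bound := fun ω => Real.exp ((θ₀ + 2) * X ω)) (Metric.ball_mem_nhds θ₀ zero_lt_one)
      (Filter.Eventually.of_forall fun θ => (I1 θ).aestronglyMeasurable)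
      (I1 θ₀) (I2 θ₀).aestronglyMeasurable ?_ (I1 (θ₀ + 2)) ?_
    · exact key.2
    · filter_upwards with ω θ hθ
      rw [Metric.mem_ball, Real.dist_eq, abs_sub_lt_iff] at hθ
      rw [Real.norm_eq_abs, abs_of_nonneg (mul_nonneg (hXnn ω) (Real.exp_pos _).le)]
      calc X ω * Real.exp (θ * X ω) ≤ Real.exp (X ω) * Real.exp ((θ₀ + 1) * X ω) := by
            apply mul_le_mul ((Real.add_one_le_exp (X ω)).trans' (by linarith))
              (Real.exp_le_exp.2 (mul_le_mul_of_nonneg_right (by linarith [hθ.1]) (hXnn ω)))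
              (Real.exp_pos _).le (Real.exp_pos _).le
        _ = Real.exp ((θ₀ + 2) * X ω) := by rw [← Real.exp_add]; ring_nf
    · filter_upwards with ω θ _
      have h1 : HasDerivAt (fun θ : ℝ => θ * X ω) (X ω) θ := by
        simpa using (hasDerivAt_id θ).mul_const (X ω)
      simpa [mul_comm] using h1.exp
  -- the auxiliary function
  set ψ : ℝ → ℝ := fun θ => Real.log (g θ) - lam * (Real.exp (θ * a) - 1) / a with hψ
  have hψderiv : ∀ θ : ℝ, HasDerivAt ψ
      ((∫ ω, X ω * Real.exp (θ * X ω) ∂μ) / g θ - lam * Real.exp (θ * a)) θ := by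
    intro θ
    have h1 : HasDerivAt (fun θ => Real.log (g θ))
        ((∫ ω, X ω * Real.exp (θ * X ω) ∂μ) / g θ) θ :=
      (hgderiv θ).log (hgpos θ).ne'
    have h2 : HasDerivAt (fun θ : ℝ => lam * (Real.exp (θ * a) - 1) / a)
        (lam * Real.exp (θ * a)) θ := by
      have he : HasDerivAt (fun θ : ℝ => Real.exp (θ * a)) (Real.exp (θ * a) * a) θ := by
        simpa using ((hasDerivAt_id θ).mul_const a).exp
      have := ((he.sub_const 1).const_mul lam).div_const a
      rw [show lam * Real.exp (θ * a) = lam * (Real.exp (θ * a) * a) / a by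
        rw [mul_div_assoc, mul_div_cancel_right₀ _ ha.ne']]
      exact this
    exact h1.sub h2
  have hψanti : AntitoneOn ψ (Set.Ici 0) := by
    apply antitoneOn_of_deriv_nonpos (convex_Ici 0)
      (Continuous.continuousOn (by
        have : ∀ θ, DifferentiableAt ℝ ψ θ := fun θ => (hψderiv θ).differentiableAt
        exact Differentiable.continuous this))
      (fun θ _ => (hψderiv θ).differentiableAt.differentiableWithinAt)
    intro θ hθ
    rw [interior_Ici] at hθ
    rw [(hψderiv θ).deriv]
    have hb := hyp θ hθ.le
    have := hgpos θ
    rw [sub_nonpos, div_le_iff₀ this]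
    exact hb
  have hψ0 : ψ 0 = 0 := by
    have : g 0 = 1 := by simp [hg]
    simp [hψ, this]
  intro θ hθ
  have := hψanti (Set.self_mem_Ici) hθ hθ
  rw [hψ0] at this
  have hlog : Real.log (g θ) ≤ lam * (Real.exp (θ * a) - 1) / a := by
    simpa [hψ, sub_nonpos] using this
  calc g θ = Real.exp (Real.log (g θ)) := (Real.exp_log (hgpos θ)).symm
    _ ≤ Real.exp (lam * (Real.exp (θ * a) - 1) / a) := Real.exp_le_exp.2 hlog
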